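/- Security subspace for the (3,5) CQ protocol, players {1,2,3}: let h be the graph on four qubits labelled (D,1,2,3) with edges {D,1}, {D,2}, {D,3}, {1,2}, {2,3}, with stabilizers k_i (no square vertices). Let W := span{|h_{(0,0,0,0)}⟩, |h_{(1,1,0,0)}⟩, |h_{(1,0,0,1)}⟩, |h_{(0,1,0,1)}⟩} (labels ordered (ℓ_D,ℓ_1,ℓ_2,ℓ_3)). Then (i) W = {ψ ∈ H_4 : k_2 ψ = ψ and (k_D∘k_1∘k_2∘k_3) ψ = ψ}; and (ii) for every finite-dimensional complex inner-product space H_E and every unit vector Ψ ∈ H_E ⊗ H_4 lying in the subspace H_E ⊗ W, the reduced state of Ψ on H_E and qubit D is product with the dealer maximally mixed: Tr_{{1,2,3}}(|Ψ⟩⟨Ψ|) = ρ_E ⊗ (Id_2/2), where ρ_E := Tr_{{D,1,2,3}}(|Ψ⟩⟨Ψ|). Consequently the mutual information between the environment E and the dealer's qubit is zero. -/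

import Mathlib

noncomputable section

open scoped ComplexConjugate

/-- The Hilbert space of qubits indexed by `V`, as functions from bit strings to `ℂ`. -/
abbrev QState (V : Type) : Type := (V → Fin 2) → ℂ

/-- The diagonal operator with diagonal entries `d`. -/
def diagOp {V : Type} (d : (V → Fin 2) → ℂ) : QState V →ₗ[ℂ] QState V where
  toFun f := fun x => d x * f x
  map_add' f g := by funext x; simp [mul_add]
  map_smul' c f := by funext x; simp [smul_eq_mul]; ring

/-- The Pauli `Z` operator on qubit `i`. -/
def Zop {V : Type} (i : V) : QState V →ₗ[ℂ] QState V :=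
  diagOp fun x => (-1 : ℂ) ^ (x i : ℕ)

/-- The Pauli `X` operator on qubit `i` (bit flip). -/
def Xop {V : Type} [DecidableEq V] (i : V) : QState V →ₗ[ℂ] QState V where
  toFun f := fun x => f (Function.update x i (x i + 1))
  map_add' f g := rfl
  map_smul' c f := rfl

/-- The phase gate `S` on qubit `i`, sending `|x⟩` to `(-i)^(x i) |x⟩`. -/
def Sop {V : Type} (i : V) : QState V →ₗ[ℂ] QState V :=
  diagOp fun x => (-Complex.I) ^ (x i : ℕ)

/-- The Pauli `Y` operator on qubit `i`, `Y = i·X·Z`. -/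
def Yop {V : Type} [DecidableEq V] (i : V) : QState V →ₗ[ℂ] QState V :=
  Complex.I • (Xop i ∘ₗ Zop i)

/-- `qVal G x` is the number of edges of `G` both of whose endpoints carry bit 1 in `x`. -/
def qVal {V : Type} (G : SimpleGraph V) (x : V → Fin 2) : ℕ :=
  Nat.card {e : Sym2 V // e ∈ G.edgeSet ∧ ∀ v ∈ e, x v = 1}

/-- The graph state `|G⟩`, with amplitudes `2^{-n/2} (-1)^{q_G(x)}`. -/
def graphState {V : Type} [Fintype V] (G : SimpleGraph V) : QState V :=
  fun x => (((Real.sqrt 2)⁻¹ ^ Fintype.card V : ℝ) : ℂ) * (-1 : ℂ) ^ qVal G x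

/-- The labeled/encoded graph state `|𝒢_ℓ⟩ = (∏_i Z_i^{ℓ_i}) (∏_{j ∈ Vsq} S_j) |G⟩`,
with square-vertex set `Vsq`. -/
def encSq {V : Type} [Fintype V] (G : SimpleGraph V) (Vsq : Set V) (ℓ : V → Fin 2) : QState V :=
  fun x => (-1 : ℂ) ^ Nat.card {i : V // ℓ i = 1 ∧ x i = 1}
    * (-Complex.I) ^ Nat.card {j : V // j ∈ Vsq ∧ x j = 1}
    * graphState G x

/-- The encoded graph state `|G_ℓ⟩` (no square vertices). -/
def encG {V : Type} [Fintype V] (G : SimpleGraph V) (ℓ : V → Fin 2) : QState V :=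
  encSq G ∅ ℓ

open Classical in
/-- The stabilizer operator of vertex `i`: `X_i ∏_{j ∈ N_i} Z_j` for circular vertices,
`Y_i ∏_{j ∈ N_i} Z_j` for square vertices (`i ∈ Vsq`). -/
def Kop {V : Type} [DecidableEq V] (G : SimpleGraph V) (Vsq : Set V) (i : V) :
    QState V →ₗ[ℂ] QState V :=
  (if i ∈ Vsq then Yop i else Xop i) ∘ₗ
    diagOp fun x => (-1 : ℂ) ^ Nat.card {j : V // G.Adj i j ∧ x j = 1}

/-- Merge a bit string on `P` with a bit string on the complement of `P`. -/
def mergeBits {V : Type} [DecidableEq V] (P : Finset V) (a : {i // i ∈ P} → Fin 2)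
    (c : {i // i ∉ P} → Fin 2) : V → Fin 2 :=
  fun i => if h : i ∈ P then a ⟨i, h⟩ else c ⟨i, h⟩

/-- The reduced density matrix of the pure state `ψ` on the qubits in `P`:
`(a, b) ↦ ∑_c ⟨a⊔c|ψ⟩⟨ψ|b⊔c⟩`. -/
def red {V : Type} [Fintype V] [DecidableEq V] (P : Finset V) (ψ : QState V) :
    ({i // i ∈ P} → Fin 2) → ({i // i ∈ P} → Fin 2) → ℂ :=
  fun a b => ∑ c : {i // i ∉ P} → Fin 2, ψ (mergeBits P a c) * conj (ψ (mergeBits P b c))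

/-- The computational basis vector `|y⟩`. -/
def basisVec {V : Type} [Fintype V] [DecidableEq V] (y : V → Fin 2) : QState V :=
  fun x => if x = y then 1 else 0

/-- The matrix entry `⟨x|A|y⟩` of an operator. -/
def opEntry {V : Type} [Fintype V] [DecidableEq V] (A : QState V →ₗ[ℂ] QState V)
    (x y : V → Fin 2) : ℂ := A (basisVec y) x

/-- `A` acts trivially outside `P`: it equals `M ⊗ Id` for some operator `M` on the
qubits in `P`. -/
def trivialOutside {V : Type} [Fintype V] [DecidableEq V] (P : Finset V)
    (A : QState V →ₗ[ℂ] QState V) : Prop :=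
  ∃ M : ({i // i ∈ P} → Fin 2) → ({i // i ∈ P} → Fin 2) → ℂ,
    ∀ a b c c', opEntry A (mergeBits P a c) (mergeBits P b c') = if c = c' then M a b else 0

/-- The product `∏_{i ∈ T} K_i` of (commuting) operators, taken in sorted order. -/
def prodOps {V : Type} [LinearOrder V] (T : Finset V)
    (K : V → QState V →ₗ[ℂ] QState V) : QState V →ₗ[ℂ] QState V :=
  (T.sort (· ≤ ·)).foldr (fun i acc => K i ∘ₗ acc) LinearMap.id


/-- The rank-one operator `|u⟩⟨v|` (conjugate-linear in `v`). -/
def outer {E : Type} [NormedAddCommGroup E] [InnerProductSpace ℂ E] (u v : E) : E →ₗ[ℂ] E where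
  toFun w := (inner ℂ v w : ℂ) • u
  map_add' w w' := by simp [inner_add_right, add_smul]
  map_smul' c w := by simp [inner_smul_right, smul_smul]

/-- The graph on the four qubits (D,1,2,3) = (0,1,2,3) with edges
{D,1}, {D,2}, {D,3}, {1,2}, {2,3}. -/
def hGraph123 : SimpleGraph (Fin 4) :=
  SimpleGraph.fromRel fun a b =>
    (a = 0 ∧ (b = 1 ∨ b = 2 ∨ b = 3)) ∨ (a = 1 ∧ b = 2) ∨ (a = 2 ∧ b = 3)

/-- The security subspace `W`, spanned by the four encoded graph states with labels
(0,0,0,0), (1,1,0,0), (1,0,0,1), (0,1,0,1) in the order (ℓ_D, ℓ_1, ℓ_2, ℓ_3). -/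
def W123 : Submodule ℂ (QState (Fin 4)) :=
  Submodule.span ℂ
    {encG hGraph123 ![0, 0, 0, 0], encG hGraph123 ![1, 1, 0, 0],
     encG hGraph123 ![1, 0, 0, 1], encG hGraph123 ![0, 1, 0, 1]}

instance hAdjDec : DecidableRel hGraph123.Adj := fun a b =>
  decidable_of_iff _ (SimpleGraph.fromRel_adj _ a b).symm

lemma fin2 (a : Fin 2) : a = 0 ∨ a = 1 := by omega

lemma card_eq (P : Fin 4 → Prop) [DecidablePred P] :
    Nat.card {j // P j} = ∑ j : Fin 4, if P j then 1 else 0 := by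
  rw [Nat.card_eq_fintype_card, Fintype.card_subtype, Finset.card_filter]

lemma ite_bit (a : Fin 2) : (if a = 1 then (1:ℕ) else 0) = (a : ℕ) := by
  rcases fin2 a with h | h <;> simp [h]

lemma card0 (y : Fin 4 → Fin 2) :
    Nat.card {j // hGraph123.Adj 0 j ∧ y j = 1} = ((y 1:ℕ) + (y 2:ℕ) + (y 3:ℕ)) := by
  rw [card_eq, Fin.sum_univ_four]
  simp only [show hGraph123.Adj 0 1 from by decide, show hGraph123.Adj 0 2 from by decide,
    show hGraph123.Adj 0 3 from by decide, show ¬ hGraph123.Adj 0 0 from by decide,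
    true_and, false_and, if_false, ite_bit]
  omega

lemma card1 (y : Fin 4 → Fin 2) :
    Nat.card {j // hGraph123.Adj 1 j ∧ y j = 1} = ((y 0:ℕ) + (y 2:ℕ)) := by
  rw [card_eq, Fin.sum_univ_four]
  simp only [show hGraph123.Adj 1 0 from by decide, show hGraph123.Adj 1 2 from by decide,
    show ¬ hGraph123.Adj 1 3 from by decide, show ¬ hGraph123.Adj 1 1 from by decide,
    true_and, false_and, if_false, ite_bit]
  omega

lemma card2 (y : Fin 4 → Fin 2) :
    Nat.card {j // hGraph123.Adj 2 j ∧ y j = 1} = ((y 0:ℕ) + (y 1:ℕ) + (y 3:ℕ)) := by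
  rw [card_eq, Fin.sum_univ_four]
  simp only [show hGraph123.Adj 2 0 from by decide, show hGraph123.Adj 2 1 from by decide,
    show hGraph123.Adj 2 3 from by decide, show ¬ hGraph123.Adj 2 2 from by decide,
    true_and, false_and, if_false, ite_bit]
  omega

lemma card3 (y : Fin 4 → Fin 2) :
    Nat.card {j // hGraph123.Adj 3 j ∧ y j = 1} = ((y 0:ℕ) + (y 2:ℕ)) := by
  rw [card_eq, Fin.sum_univ_four]
  simp only [show hGraph123.Adj 3 0 from by decide, show hGraph123.Adj 3 2 from by decide,
    show ¬ hGraph123.Adj 3 3 from by decide, show ¬ hGraph123.Adj 3 1 from by decide,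
    true_and, false_and, if_false, ite_bit]
  omega

def fl (i : Fin 4) (x : Fin 4 → Fin 2) : Fin 4 → Fin 2 := Function.update x i (x i + 1)
def cmpl (x : Fin 4 → Fin 2) : Fin 4 → Fin 2 := fun i => x i + 1

lemma K_apply (i : Fin 4) (ψ : QState (Fin 4)) (x : Fin 4 → Fin 2) :
    Kop hGraph123 ∅ i ψ x
      = (-1:ℂ)^(Nat.card {j // hGraph123.Adj i j ∧ fl i x j = 1}) * ψ (fl i x) := by
  simp [Kop, Xop, diagOp, fl]

lemma fl_eval_ne (i j : Fin 4) (x : Fin 4 → Fin 2) (h : j ≠ i) : fl i x j = x j :=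
  Function.update_of_ne h _ _

lemma K2_apply (ψ : QState (Fin 4)) (x : Fin 4 → Fin 2) :
    Kop hGraph123 ∅ 2 ψ x = (-1:ℂ)^((x 0:ℕ)+(x 1:ℕ)+(x 3:ℕ)) * ψ (fl 2 x) := by
  rw [K_apply, card2, fl_eval_ne _ _ _ (by decide), fl_eval_ne _ _ _ (by decide),
    fl_eval_ne _ _ _ (by decide)]
lemma K0_apply (ψ : QState (Fin 4)) (x : Fin 4 → Fin 2) :
    Kop hGraph123 ∅ 0 ψ x = (-1:ℂ)^((x 1:ℕ)+(x 2:ℕ)+(x 3:ℕ)) * ψ (fl 0 x) := by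
  rw [K_apply, card0, fl_eval_ne _ _ _ (by decide), fl_eval_ne _ _ _ (by decide),
    fl_eval_ne _ _ _ (by decide)]

lemma K1_apply (ψ : QState (Fin 4)) (x : Fin 4 → Fin 2) :
    Kop hGraph123 ∅ 1 ψ x = (-1:ℂ)^((x 0:ℕ)+(x 2:ℕ)) * ψ (fl 1 x) := by
  rw [K_apply, card1, fl_eval_ne _ _ _ (by decide), fl_eval_ne _ _ _ (by decide)]

lemma K3_apply (ψ : QState (Fin 4)) (x : Fin 4 → Fin 2) :
    Kop hGraph123 ∅ 3 ψ x = (-1:ℂ)^((x 0:ℕ)+(x 2:ℕ)) * ψ (fl 3 x) := by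
  rw [K_apply, card3, fl_eval_ne _ _ _ (by decide), fl_eval_ne _ _ _ (by decide)]

lemma Kprod_apply (ψ : QState (Fin 4)) (x : Fin 4 → Fin 2) :
    (Kop hGraph123 ∅ 0 ∘ₗ Kop hGraph123 ∅ 1 ∘ₗ Kop hGraph123 ∅ 2 ∘ₗ Kop hGraph123 ∅ 3) ψ x
      = -((-1:ℂ)^((x 0:ℕ)+(x 2:ℕ)) * ψ (cmpl x)) := by
  have hpt : fl 3 (fl 2 (fl 1 (fl 0 x))) = cmpl x := by
    funext i; fin_cases i <;> simp (config := { decide := true }) [fl, cmpl, Function.update]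
  simp only [LinearMap.comp_apply]
  rw [K0_apply, K1_apply, K2_apply, K3_apply, hpt]
  rcases fin2 (x 0) with h0 | h0 <;> rcases fin2 (x 1) with h1 | h1 <;>
    rcases fin2 (x 2) with h2 | h2 <;> rcases fin2 (x 3) with h3 | h3 <;>
    simp (config := { decide := true }) [fl, Function.update, h0, h1, h2, h3] <;> norm_num
lemma sqrt_pow : (((Real.sqrt 2)⁻¹ ^ 4 : ℝ) : ℂ) = 1/4 := by
  have h : (Real.sqrt 2) ^ 2 = 2 := Real.sq_sqrt (by norm_num)
  have : ((Real.sqrt 2)⁻¹ ^ 4 : ℝ) = 1/4 := by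
    rw [inv_pow, show (4:ℕ) = 2*2 from rfl, pow_mul, h]; norm_num
  rw [this]; norm_num

lemma encG_eq (ℓ x : Fin 4 → Fin 2) :
    encG hGraph123 ℓ x
      = (-1:ℂ)^(Nat.card {i // ℓ i = 1 ∧ x i = 1} + qVal hGraph123 x) * (1/4) := by
  have he : Nat.card {j : Fin 4 // j ∈ (∅ : Set (Fin 4)) ∧ x j = 1} = 0 := by
    have : IsEmpty {j : Fin 4 // j ∈ (∅ : Set (Fin 4)) ∧ x j = 1} :=
      ⟨fun ⟨j, hj, _⟩ => hj⟩
    exact Nat.card_of_isEmpty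
  rw [encG, encSq, he, graphState, show Fintype.card (Fin 4) = 4 from rfl, sqrt_pow, pow_add]
  ring

lemma gval (ℓ x : Fin 4 → Fin 2) (a b : ℕ) (h1 : Nat.card {i // ℓ i = 1 ∧ x i = 1} = a)
    (h2 : qVal hGraph123 x = b) :
    encG hGraph123 ℓ x = (-1:ℂ)^(a+b) * (1/4) := by rw [encG_eq, h1, h2]


lemma gv0x0000 : encG hGraph123 ![0,0,0,0] ![0,0,0,0] = (1/4 : ℂ) := by
  rw [gval _ _ 0 0 (by rw [Nat.card_eq_fintype_card]; decide)
    (by rw [qVal, Nat.card_eq_fintype_card]; decide)]; norm_num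

lemma gv0x0001 : encG hGraph123 ![0,0,0,0] ![0,0,0,1] = (1/4 : ℂ) := by
  rw [gval _ _ 0 0 (by rw [Nat.card_eq_fintype_card]; decide)
    (by rw [qVal, Nat.card_eq_fintype_card]; decide)]; norm_num

lemma gv0x0010 : encG hGraph123 ![0,0,0,0] ![0,0,1,0] = (1/4 : ℂ) := by
  rw [gval _ _ 0 0 (by rw [Nat.card_eq_fintype_card]; decide)
    (by rw [qVal, Nat.card_eq_fintype_card]; decide)]; norm_num

lemma gv0x0011 : encG hGraph123 ![0,0,0,0] ![0,0,1,1] = -(1/4 : ℂ) := by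
  rw [gval _ _ 0 1 (by rw [Nat.card_eq_fintype_card]; decide)
    (by rw [qVal, Nat.card_eq_fintype_card]; decide)]; norm_num

lemma gv0x0100 : encG hGraph123 ![0,0,0,0] ![0,1,0,0] = (1/4 : ℂ) := by
  rw [gval _ _ 0 0 (by rw [Nat.card_eq_fintype_card]; decide)
    (by rw [qVal, Nat.card_eq_fintype_card]; decide)]; norm_num

lemma gv0x0101 : encG hGraph123 ![0,0,0,0] ![0,1,0,1] = (1/4 : ℂ) := by
  rw [gval _ _ 0 0 (by rw [Nat.card_eq_fintype_card]; decide)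
    (by rw [qVal, Nat.card_eq_fintype_card]; decide)]; norm_num

lemma gv0x0110 : encG hGraph123 ![0,0,0,0] ![0,1,1,0] = -(1/4 : ℂ) := by
  rw [gval _ _ 0 1 (by rw [Nat.card_eq_fintype_card]; decide)
    (by rw [qVal, Nat.card_eq_fintype_card]; decide)]; norm_num

lemma gv0x0111 : encG hGraph123 ![0,0,0,0] ![0,1,1,1] = (1/4 : ℂ) := by
  rw [gval _ _ 0 2 (by rw [Nat.card_eq_fintype_card]; decide)
    (by rw [qVal, Nat.card_eq_fintype_card]; decide)]; norm_num

lemma gv0x1000 : encG hGraph123 ![0,0,0,0] ![1,0,0,0] = (1/4 : ℂ) := by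
  rw [gval _ _ 0 0 (by rw [Nat.card_eq_fintype_card]; decide)
    (by rw [qVal, Nat.card_eq_fintype_card]; decide)]; norm_num

lemma gv0x1001 : encG hGraph123 ![0,0,0,0] ![1,0,0,1] = -(1/4 : ℂ) := by
  rw [gval _ _ 0 1 (by rw [Nat.card_eq_fintype_card]; decide)
    (by rw [qVal, Nat.card_eq_fintype_card]; decide)]; norm_num

lemma gv0x1010 : encG hGraph123 ![0,0,0,0] ![1,0,1,0] = -(1/4 : ℂ) := by
  rw [gval _ _ 0 1 (by rw [Nat.card_eq_fintype_card]; decide)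
    (by rw [qVal, Nat.card_eq_fintype_card]; decide)]; norm_num

lemma gv0x1011 : encG hGraph123 ![0,0,0,0] ![1,0,1,1] = -(1/4 : ℂ) := by
  rw [gval _ _ 0 3 (by rw [Nat.card_eq_fintype_card]; decide)
    (by rw [qVal, Nat.card_eq_fintype_card]; decide)]; norm_num

lemma gv0x1100 : encG hGraph123 ![0,0,0,0] ![1,1,0,0] = -(1/4 : ℂ) := by
  rw [gval _ _ 0 1 (by rw [Nat.card_eq_fintype_card]; decide)
    (by rw [qVal, Nat.card_eq_fintype_card]; decide)]; norm_num

lemma gv0x1101 : encG hGraph123 ![0,0,0,0] ![1,1,0,1] = (1/4 : ℂ) := by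
  rw [gval _ _ 0 2 (by rw [Nat.card_eq_fintype_card]; decide)
    (by rw [qVal, Nat.card_eq_fintype_card]; decide)]; norm_num

lemma gv0x1110 : encG hGraph123 ![0,0,0,0] ![1,1,1,0] = -(1/4 : ℂ) := by
  rw [gval _ _ 0 3 (by rw [Nat.card_eq_fintype_card]; decide)
    (by rw [qVal, Nat.card_eq_fintype_card]; decide)]; norm_num

lemma gv0x1111 : encG hGraph123 ![0,0,0,0] ![1,1,1,1] = -(1/4 : ℂ) := by
  rw [gval _ _ 0 5 (by rw [Nat.card_eq_fintype_card]; decide)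
    (by rw [qVal, Nat.card_eq_fintype_card]; decide)]; norm_num

lemma gv1x0000 : encG hGraph123 ![1,1,0,0] ![0,0,0,0] = (1/4 : ℂ) := by
  rw [gval _ _ 0 0 (by rw [Nat.card_eq_fintype_card]; decide)
    (by rw [qVal, Nat.card_eq_fintype_card]; decide)]; norm_num

lemma gv1x0001 : encG hGraph123 ![1,1,0,0] ![0,0,0,1] = (1/4 : ℂ) := by
  rw [gval _ _ 0 0 (by rw [Nat.card_eq_fintype_card]; decide)
    (by rw [qVal, Nat.card_eq_fintype_card]; decide)]; norm_num

lemma gv1x0010 : encG hGraph123 ![1,1,0,0] ![0,0,1,0] = (1/4 : ℂ) := by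
  rw [gval _ _ 0 0 (by rw [Nat.card_eq_fintype_card]; decide)
    (by rw [qVal, Nat.card_eq_fintype_card]; decide)]; norm_num

lemma gv1x0011 : encG hGraph123 ![1,1,0,0] ![0,0,1,1] = -(1/4 : ℂ) := by
  rw [gval _ _ 0 1 (by rw [Nat.card_eq_fintype_card]; decide)
    (by rw [qVal, Nat.card_eq_fintype_card]; decide)]; norm_num

lemma gv1x0100 : encG hGraph123 ![1,1,0,0] ![0,1,0,0] = -(1/4 : ℂ) := by
  rw [gval _ _ 1 0 (by rw [Nat.card_eq_fintype_card]; decide)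
    (by rw [qVal, Nat.card_eq_fintype_card]; decide)]; norm_num

lemma gv1x0101 : encG hGraph123 ![1,1,0,0] ![0,1,0,1] = -(1/4 : ℂ) := by
  rw [gval _ _ 1 0 (by rw [Nat.card_eq_fintype_card]; decide)
    (by rw [qVal, Nat.card_eq_fintype_card]; decide)]; norm_num

lemma gv1x0110 : encG hGraph123 ![1,1,0,0] ![0,1,1,0] = (1/4 : ℂ) := by
  rw [gval _ _ 1 1 (by rw [Nat.card_eq_fintype_card]; decide)
    (by rw [qVal, Nat.card_eq_fintype_card]; decide)]; norm_num

lemma gv1x0111 : encG hGraph123 ![1,1,0,0] ![0,1,1,1] = -(1/4 : ℂ) := by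
  rw [gval _ _ 1 2 (by rw [Nat.card_eq_fintype_card]; decide)
    (by rw [qVal, Nat.card_eq_fintype_card]; decide)]; norm_num

lemma gv1x1000 : encG hGraph123 ![1,1,0,0] ![1,0,0,0] = -(1/4 : ℂ) := by
  rw [gval _ _ 1 0 (by rw [Nat.card_eq_fintype_card]; decide)
    (by rw [qVal, Nat.card_eq_fintype_card]; decide)]; norm_num

lemma gv1x1001 : encG hGraph123 ![1,1,0,0] ![1,0,0,1] = (1/4 : ℂ) := by
  rw [gval _ _ 1 1 (by rw [Nat.card_eq_fintype_card]; decide)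
    (by rw [qVal, Nat.card_eq_fintype_card]; decide)]; norm_num

lemma gv1x1010 : encG hGraph123 ![1,1,0,0] ![1,0,1,0] = (1/4 : ℂ) := by
  rw [gval _ _ 1 1 (by rw [Nat.card_eq_fintype_card]; decide)
    (by rw [qVal, Nat.card_eq_fintype_card]; decide)]; norm_num

lemma gv1x1011 : encG hGraph123 ![1,1,0,0] ![1,0,1,1] = (1/4 : ℂ) := by
  rw [gval _ _ 1 3 (by rw [Nat.card_eq_fintype_card]; decide)
    (by rw [qVal, Nat.card_eq_fintype_card]; decide)]; norm_num

lemma gv1x1100 : encG hGraph123 ![1,1,0,0] ![1,1,0,0] = -(1/4 : ℂ) := by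
  rw [gval _ _ 2 1 (by rw [Nat.card_eq_fintype_card]; decide)
    (by rw [qVal, Nat.card_eq_fintype_card]; decide)]; norm_num

lemma gv1x1101 : encG hGraph123 ![1,1,0,0] ![1,1,0,1] = (1/4 : ℂ) := by
  rw [gval _ _ 2 2 (by rw [Nat.card_eq_fintype_card]; decide)
    (by rw [qVal, Nat.card_eq_fintype_card]; decide)]; norm_num

lemma gv1x1110 : encG hGraph123 ![1,1,0,0] ![1,1,1,0] = -(1/4 : ℂ) := by
  rw [gval _ _ 2 3 (by rw [Nat.card_eq_fintype_card]; decide)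
    (by rw [qVal, Nat.card_eq_fintype_card]; decide)]; norm_num

lemma gv1x1111 : encG hGraph123 ![1,1,0,0] ![1,1,1,1] = -(1/4 : ℂ) := by
  rw [gval _ _ 2 5 (by rw [Nat.card_eq_fintype_card]; decide)
    (by rw [qVal, Nat.card_eq_fintype_card]; decide)]; norm_num

lemma gv2x0000 : encG hGraph123 ![1,0,0,1] ![0,0,0,0] = (1/4 : ℂ) := by
  rw [gval _ _ 0 0 (by rw [Nat.card_eq_fintype_card]; decide)
    (by rw [qVal, Nat.card_eq_fintype_card]; decide)]; norm_num

lemma gv2x0001 : encG hGraph123 ![1,0,0,1] ![0,0,0,1] = -(1/4 : ℂ) := by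
  rw [gval _ _ 1 0 (by rw [Nat.card_eq_fintype_card]; decide)
    (by rw [qVal, Nat.card_eq_fintype_card]; decide)]; norm_num

lemma gv2x0010 : encG hGraph123 ![1,0,0,1] ![0,0,1,0] = (1/4 : ℂ) := by
  rw [gval _ _ 0 0 (by rw [Nat.card_eq_fintype_card]; decide)
    (by rw [qVal, Nat.card_eq_fintype_card]; decide)]; norm_num

lemma gv2x0011 : encG hGraph123 ![1,0,0,1] ![0,0,1,1] = (1/4 : ℂ) := by
  rw [gval _ _ 1 1 (by rw [Nat.card_eq_fintype_card]; decide)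
    (by rw [qVal, Nat.card_eq_fintype_card]; decide)]; norm_num

lemma gv2x0100 : encG hGraph123 ![1,0,0,1] ![0,1,0,0] = (1/4 : ℂ) := by
  rw [gval _ _ 0 0 (by rw [Nat.card_eq_fintype_card]; decide)
    (by rw [qVal, Nat.card_eq_fintype_card]; decide)]; norm_num

lemma gv2x0101 : encG hGraph123 ![1,0,0,1] ![0,1,0,1] = -(1/4 : ℂ) := by
  rw [gval _ _ 1 0 (by rw [Nat.card_eq_fintype_card]; decide)
    (by rw [qVal, Nat.card_eq_fintype_card]; decide)]; norm_num

lemma gv2x0110 : encG hGraph123 ![1,0,0,1] ![0,1,1,0] = -(1/4 : ℂ) := by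
  rw [gval _ _ 0 1 (by rw [Nat.card_eq_fintype_card]; decide)
    (by rw [qVal, Nat.card_eq_fintype_card]; decide)]; norm_num

lemma gv2x0111 : encG hGraph123 ![1,0,0,1] ![0,1,1,1] = -(1/4 : ℂ) := by
  rw [gval _ _ 1 2 (by rw [Nat.card_eq_fintype_card]; decide)
    (by rw [qVal, Nat.card_eq_fintype_card]; decide)]; norm_num

lemma gv2x1000 : encG hGraph123 ![1,0,0,1] ![1,0,0,0] = -(1/4 : ℂ) := by
  rw [gval _ _ 1 0 (by rw [Nat.card_eq_fintype_card]; decide)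
    (by rw [qVal, Nat.card_eq_fintype_card]; decide)]; norm_num

lemma gv2x1001 : encG hGraph123 ![1,0,0,1] ![1,0,0,1] = -(1/4 : ℂ) := by
  rw [gval _ _ 2 1 (by rw [Nat.card_eq_fintype_card]; decide)
    (by rw [qVal, Nat.card_eq_fintype_card]; decide)]; norm_num

lemma gv2x1010 : encG hGraph123 ![1,0,0,1] ![1,0,1,0] = (1/4 : ℂ) := by
  rw [gval _ _ 1 1 (by rw [Nat.card_eq_fintype_card]; decide)
    (by rw [qVal, Nat.card_eq_fintype_card]; decide)]; norm_num

lemma gv2x1011 : encG hGraph123 ![1,0,0,1] ![1,0,1,1] = -(1/4 : ℂ) := by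
  rw [gval _ _ 2 3 (by rw [Nat.card_eq_fintype_card]; decide)
    (by rw [qVal, Nat.card_eq_fintype_card]; decide)]; norm_num

lemma gv2x1100 : encG hGraph123 ![1,0,0,1] ![1,1,0,0] = (1/4 : ℂ) := by
  rw [gval _ _ 1 1 (by rw [Nat.card_eq_fintype_card]; decide)
    (by rw [qVal, Nat.card_eq_fintype_card]; decide)]; norm_num

lemma gv2x1101 : encG hGraph123 ![1,0,0,1] ![1,1,0,1] = (1/4 : ℂ) := by
  rw [gval _ _ 2 2 (by rw [Nat.card_eq_fintype_card]; decide)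
    (by rw [qVal, Nat.card_eq_fintype_card]; decide)]; norm_num

lemma gv2x1110 : encG hGraph123 ![1,0,0,1] ![1,1,1,0] = (1/4 : ℂ) := by
  rw [gval _ _ 1 3 (by rw [Nat.card_eq_fintype_card]; decide)
    (by rw [qVal, Nat.card_eq_fintype_card]; decide)]; norm_num

lemma gv2x1111 : encG hGraph123 ![1,0,0,1] ![1,1,1,1] = -(1/4 : ℂ) := by
  rw [gval _ _ 2 5 (by rw [Nat.card_eq_fintype_card]; decide)
    (by rw [qVal, Nat.card_eq_fintype_card]; decide)]; norm_num

lemma gv3x0000 : encG hGraph123 ![0,1,0,1] ![0,0,0,0] = (1/4 : ℂ) := by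
  rw [gval _ _ 0 0 (by rw [Nat.card_eq_fintype_card]; decide)
    (by rw [qVal, Nat.card_eq_fintype_card]; decide)]; norm_num

lemma gv3x0001 : encG hGraph123 ![0,1,0,1] ![0,0,0,1] = -(1/4 : ℂ) := by
  rw [gval _ _ 1 0 (by rw [Nat.card_eq_fintype_card]; decide)
    (by rw [qVal, Nat.card_eq_fintype_card]; decide)]; norm_num

lemma gv3x0010 : encG hGraph123 ![0,1,0,1] ![0,0,1,0] = (1/4 : ℂ) := by
  rw [gval _ _ 0 0 (by rw [Nat.card_eq_fintype_card]; decide)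
    (by rw [qVal, Nat.card_eq_fintype_card]; decide)]; norm_num

lemma gv3x0011 : encG hGraph123 ![0,1,0,1] ![0,0,1,1] = (1/4 : ℂ) := by
  rw [gval _ _ 1 1 (by rw [Nat.card_eq_fintype_card]; decide)
    (by rw [qVal, Nat.card_eq_fintype_card]; decide)]; norm_num

lemma gv3x0100 : encG hGraph123 ![0,1,0,1] ![0,1,0,0] = -(1/4 : ℂ) := by
  rw [gval _ _ 1 0 (by rw [Nat.card_eq_fintype_card]; decide)
    (by rw [qVal, Nat.card_eq_fintype_card]; decide)]; norm_num

lemma gv3x0101 : encG hGraph123 ![0,1,0,1] ![0,1,0,1] = (1/4 : ℂ) := by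
  rw [gval _ _ 2 0 (by rw [Nat.card_eq_fintype_card]; decide)
    (by rw [qVal, Nat.card_eq_fintype_card]; decide)]; norm_num

lemma gv3x0110 : encG hGraph123 ![0,1,0,1] ![0,1,1,0] = (1/4 : ℂ) := by
  rw [gval _ _ 1 1 (by rw [Nat.card_eq_fintype_card]; decide)
    (by rw [qVal, Nat.card_eq_fintype_card]; decide)]; norm_num

lemma gv3x0111 : encG hGraph123 ![0,1,0,1] ![0,1,1,1] = (1/4 : ℂ) := by
  rw [gval _ _ 2 2 (by rw [Nat.card_eq_fintype_card]; decide)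
    (by rw [qVal, Nat.card_eq_fintype_card]; decide)]; norm_num

lemma gv3x1000 : encG hGraph123 ![0,1,0,1] ![1,0,0,0] = (1/4 : ℂ) := by
  rw [gval _ _ 0 0 (by rw [Nat.card_eq_fintype_card]; decide)
    (by rw [qVal, Nat.card_eq_fintype_card]; decide)]; norm_num

lemma gv3x1001 : encG hGraph123 ![0,1,0,1] ![1,0,0,1] = (1/4 : ℂ) := by
  rw [gval _ _ 1 1 (by rw [Nat.card_eq_fintype_card]; decide)
    (by rw [qVal, Nat.card_eq_fintype_card]; decide)]; norm_num

lemma gv3x1010 : encG hGraph123 ![0,1,0,1] ![1,0,1,0] = -(1/4 : ℂ) := by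
  rw [gval _ _ 0 1 (by rw [Nat.card_eq_fintype_card]; decide)
    (by rw [qVal, Nat.card_eq_fintype_card]; decide)]; norm_num

lemma gv3x1011 : encG hGraph123 ![0,1,0,1] ![1,0,1,1] = (1/4 : ℂ) := by
  rw [gval _ _ 1 3 (by rw [Nat.card_eq_fintype_card]; decide)
    (by rw [qVal, Nat.card_eq_fintype_card]; decide)]; norm_num

lemma gv3x1100 : encG hGraph123 ![0,1,0,1] ![1,1,0,0] = (1/4 : ℂ) := by
  rw [gval _ _ 1 1 (by rw [Nat.card_eq_fintype_card]; decide)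
    (by rw [qVal, Nat.card_eq_fintype_card]; decide)]; norm_num

lemma gv3x1101 : encG hGraph123 ![0,1,0,1] ![1,1,0,1] = (1/4 : ℂ) := by
  rw [gval _ _ 2 2 (by rw [Nat.card_eq_fintype_card]; decide)
    (by rw [qVal, Nat.card_eq_fintype_card]; decide)]; norm_num

lemma gv3x1110 : encG hGraph123 ![0,1,0,1] ![1,1,1,0] = (1/4 : ℂ) := by
  rw [gval _ _ 1 3 (by rw [Nat.card_eq_fintype_card]; decide)
    (by rw [qVal, Nat.card_eq_fintype_card]; decide)]; norm_num

lemma gv3x1111 : encG hGraph123 ![0,1,0,1] ![1,1,1,1] = -(1/4 : ℂ) := by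
  rw [gval _ _ 2 5 (by rw [Nat.card_eq_fintype_card]; decide)
    (by rw [qVal, Nat.card_eq_fintype_card]; decide)]; norm_num

lemma fle0000 : fl 2 ![0,0,0,0] = ![0,0,1,0] := by decide

lemma cme0000 : cmpl ![0,0,0,0] = ![1,1,1,1] := by decide

lemma fle0001 : fl 2 ![0,0,0,1] = ![0,0,1,1] := by decide

lemma cme0001 : cmpl ![0,0,0,1] = ![1,1,1,0] := by decide

lemma fle0010 : fl 2 ![0,0,1,0] = ![0,0,0,0] := by decide

lemma cme0010 : cmpl ![0,0,1,0] = ![1,1,0,1] := by decide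

lemma fle0011 : fl 2 ![0,0,1,1] = ![0,0,0,1] := by decide

lemma cme0011 : cmpl ![0,0,1,1] = ![1,1,0,0] := by decide

lemma fle0100 : fl 2 ![0,1,0,0] = ![0,1,1,0] := by decide

lemma cme0100 : cmpl ![0,1,0,0] = ![1,0,1,1] := by decide

lemma fle0101 : fl 2 ![0,1,0,1] = ![0,1,1,1] := by decide

lemma cme0101 : cmpl ![0,1,0,1] = ![1,0,1,0] := by decide

lemma fle0110 : fl 2 ![0,1,1,0] = ![0,1,0,0] := by decide

lemma cme0110 : cmpl ![0,1,1,0] = ![1,0,0,1] := by decide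

lemma fle0111 : fl 2 ![0,1,1,1] = ![0,1,0,1] := by decide

lemma cme0111 : cmpl ![0,1,1,1] = ![1,0,0,0] := by decide

lemma fle1000 : fl 2 ![1,0,0,0] = ![1,0,1,0] := by decide

lemma cme1000 : cmpl ![1,0,0,0] = ![0,1,1,1] := by decide

lemma fle1001 : fl 2 ![1,0,0,1] = ![1,0,1,1] := by decide

lemma cme1001 : cmpl ![1,0,0,1] = ![0,1,1,0] := by decide

lemma fle1010 : fl 2 ![1,0,1,0] = ![1,0,0,0] := by decide

lemma cme1010 : cmpl ![1,0,1,0] = ![0,1,0,1] := by decide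

lemma fle1011 : fl 2 ![1,0,1,1] = ![1,0,0,1] := by decide

lemma cme1011 : cmpl ![1,0,1,1] = ![0,1,0,0] := by decide

lemma fle1100 : fl 2 ![1,1,0,0] = ![1,1,1,0] := by decide

lemma cme1100 : cmpl ![1,1,0,0] = ![0,0,1,1] := by decide

lemma fle1101 : fl 2 ![1,1,0,1] = ![1,1,1,1] := by decide

lemma cme1101 : cmpl ![1,1,0,1] = ![0,0,1,0] := by decide

lemma fle1110 : fl 2 ![1,1,1,0] = ![1,1,0,0] := by decide

lemma cme1110 : cmpl ![1,1,1,0] = ![0,0,0,1] := by decide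

lemma fle1111 : fl 2 ![1,1,1,1] = ![1,1,0,1] := by decide

lemma cme1111 : cmpl ![1,1,1,1] = ![0,0,0,0] := by decide

lemma v4_3 (a b c d : Fin 2) : (![a,b,c,d] : Fin 4 → Fin 2) 3 = d := rfl

lemma v4_2 (a b c d : Fin 2) : (![a,b,c,d] : Fin 4 → Fin 2) 2 = c := rfl

lemma fwdA0 : Kop hGraph123 ∅ 2 (encG hGraph123 ![0,0,0,0]) = encG hGraph123 ![0,0,0,0] := by
  funext x
  obtain ⟨a, b, c, d, rfl⟩ : ∃ a b c d, x = ![a, b, c, d] :=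
    ⟨x 0, x 1, x 2, x 3, funext fun i => by fin_cases i <;> rfl⟩
  rw [K2_apply]
  rcases fin2 a with rfl | rfl <;> rcases fin2 b with rfl | rfl <;>
    rcases fin2 c with rfl | rfl <;> rcases fin2 d with rfl | rfl <;>
    norm_num [v4_3, v4_2, fle0000, fle0001, fle0010, fle0011, fle0100, fle0101, fle0110, fle0111, fle1000, fle1001, fle1010, fle1011, fle1100, fle1101, fle1110, fle1111, gv0x0000, gv0x0001, gv0x0010, gv0x0011, gv0x0100, gv0x0101, gv0x0110, gv0x0111, gv0x1000, gv0x1001, gv0x1010, gv0x1011, gv0x1100, gv0x1101, gv0x1110, gv0x1111]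

lemma fwdB0 : (Kop hGraph123 ∅ 0 ∘ₗ Kop hGraph123 ∅ 1 ∘ₗ Kop hGraph123 ∅ 2 ∘ₗ
    Kop hGraph123 ∅ 3) (encG hGraph123 ![0,0,0,0]) = encG hGraph123 ![0,0,0,0] := by
  funext x
  obtain ⟨a, b, c, d, rfl⟩ : ∃ a b c d, x = ![a, b, c, d] :=
    ⟨x 0, x 1, x 2, x 3, funext fun i => by fin_cases i <;> rfl⟩
  rw [Kprod_apply]
  rcases fin2 a with rfl | rfl <;> rcases fin2 b with rfl | rfl <;>
    rcases fin2 c with rfl | rfl <;> rcases fin2 d with rfl | rfl <;>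
    norm_num [v4_3, v4_2, cme0000, cme0001, cme0010, cme0011, cme0100, cme0101, cme0110, cme0111, cme1000, cme1001, cme1010, cme1011, cme1100, cme1101, cme1110, cme1111, gv0x0000, gv0x0001, gv0x0010, gv0x0011, gv0x0100, gv0x0101, gv0x0110, gv0x0111, gv0x1000, gv0x1001, gv0x1010, gv0x1011, gv0x1100, gv0x1101, gv0x1110, gv0x1111]

lemma fwdA1 : Kop hGraph123 ∅ 2 (encG hGraph123 ![1,1,0,0]) = encG hGraph123 ![1,1,0,0] := by
  funext x
  obtain ⟨a, b, c, d, rfl⟩ : ∃ a b c d, x = ![a, b, c, d] :=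
    ⟨x 0, x 1, x 2, x 3, funext fun i => by fin_cases i <;> rfl⟩
  rw [K2_apply]
  rcases fin2 a with rfl | rfl <;> rcases fin2 b with rfl | rfl <;>
    rcases fin2 c with rfl | rfl <;> rcases fin2 d with rfl | rfl <;>
    norm_num [v4_3, v4_2, fle0000, fle0001, fle0010, fle0011, fle0100, fle0101, fle0110, fle0111, fle1000, fle1001, fle1010, fle1011, fle1100, fle1101, fle1110, fle1111, gv1x0000, gv1x0001, gv1x0010, gv1x0011, gv1x0100, gv1x0101, gv1x0110, gv1x0111, gv1x1000, gv1x1001, gv1x1010, gv1x1011, gv1x1100, gv1x1101, gv1x1110, gv1x1111]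

lemma fwdB1 : (Kop hGraph123 ∅ 0 ∘ₗ Kop hGraph123 ∅ 1 ∘ₗ Kop hGraph123 ∅ 2 ∘ₗ
    Kop hGraph123 ∅ 3) (encG hGraph123 ![1,1,0,0]) = encG hGraph123 ![1,1,0,0] := by
  funext x
  obtain ⟨a, b, c, d, rfl⟩ : ∃ a b c d, x = ![a, b, c, d] :=
    ⟨x 0, x 1, x 2, x 3, funext fun i => by fin_cases i <;> rfl⟩
  rw [Kprod_apply]
  rcases fin2 a with rfl | rfl <;> rcases fin2 b with rfl | rfl <;>
    rcases fin2 c with rfl | rfl <;> rcases fin2 d with rfl | rfl <;>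
    norm_num [v4_3, v4_2, cme0000, cme0001, cme0010, cme0011, cme0100, cme0101, cme0110, cme0111, cme1000, cme1001, cme1010, cme1011, cme1100, cme1101, cme1110, cme1111, gv1x0000, gv1x0001, gv1x0010, gv1x0011, gv1x0100, gv1x0101, gv1x0110, gv1x0111, gv1x1000, gv1x1001, gv1x1010, gv1x1011, gv1x1100, gv1x1101, gv1x1110, gv1x1111]

lemma fwdA2 : Kop hGraph123 ∅ 2 (encG hGraph123 ![1,0,0,1]) = encG hGraph123 ![1,0,0,1] := by
  funext x
  obtain ⟨a, b, c, d, rfl⟩ : ∃ a b c d, x = ![a, b, c, d] :=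
    ⟨x 0, x 1, x 2, x 3, funext fun i => by fin_cases i <;> rfl⟩
  rw [K2_apply]
  rcases fin2 a with rfl | rfl <;> rcases fin2 b with rfl | rfl <;>
    rcases fin2 c with rfl | rfl <;> rcases fin2 d with rfl | rfl <;>
    norm_num [v4_3, v4_2, fle0000, fle0001, fle0010, fle0011, fle0100, fle0101, fle0110, fle0111, fle1000, fle1001, fle1010, fle1011, fle1100, fle1101, fle1110, fle1111, gv2x0000, gv2x0001, gv2x0010, gv2x0011, gv2x0100, gv2x0101, gv2x0110, gv2x0111, gv2x1000, gv2x1001, gv2x1010, gv2x1011, gv2x1100, gv2x1101, gv2x1110, gv2x1111]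

lemma fwdB2 : (Kop hGraph123 ∅ 0 ∘ₗ Kop hGraph123 ∅ 1 ∘ₗ Kop hGraph123 ∅ 2 ∘ₗ
    Kop hGraph123 ∅ 3) (encG hGraph123 ![1,0,0,1]) = encG hGraph123 ![1,0,0,1] := by
  funext x
  obtain ⟨a, b, c, d, rfl⟩ : ∃ a b c d, x = ![a, b, c, d] :=
    ⟨x 0, x 1, x 2, x 3, funext fun i => by fin_cases i <;> rfl⟩
  rw [Kprod_apply]
  rcases fin2 a with rfl | rfl <;> rcases fin2 b with rfl | rfl <;>
    rcases fin2 c with rfl | rfl <;> rcases fin2 d with rfl | rfl <;>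
    norm_num [v4_3, v4_2, cme0000, cme0001, cme0010, cme0011, cme0100, cme0101, cme0110, cme0111, cme1000, cme1001, cme1010, cme1011, cme1100, cme1101, cme1110, cme1111, gv2x0000, gv2x0001, gv2x0010, gv2x0011, gv2x0100, gv2x0101, gv2x0110, gv2x0111, gv2x1000, gv2x1001, gv2x1010, gv2x1011, gv2x1100, gv2x1101, gv2x1110, gv2x1111]

lemma fwdA3 : Kop hGraph123 ∅ 2 (encG hGraph123 ![0,1,0,1]) = encG hGraph123 ![0,1,0,1] := by
  funext x
  obtain ⟨a, b, c, d, rfl⟩ : ∃ a b c d, x = ![a, b, c, d] :=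
    ⟨x 0, x 1, x 2, x 3, funext fun i => by fin_cases i <;> rfl⟩
  rw [K2_apply]
  rcases fin2 a with rfl | rfl <;> rcases fin2 b with rfl | rfl <;>
    rcases fin2 c with rfl | rfl <;> rcases fin2 d with rfl | rfl <;>
    norm_num [v4_3, v4_2, fle0000, fle0001, fle0010, fle0011, fle0100, fle0101, fle0110, fle0111, fle1000, fle1001, fle1010, fle1011, fle1100, fle1101, fle1110, fle1111, gv3x0000, gv3x0001, gv3x0010, gv3x0011, gv3x0100, gv3x0101, gv3x0110, gv3x0111, gv3x1000, gv3x1001, gv3x1010, gv3x1011, gv3x1100, gv3x1101, gv3x1110, gv3x1111]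

lemma fwdB3 : (Kop hGraph123 ∅ 0 ∘ₗ Kop hGraph123 ∅ 1 ∘ₗ Kop hGraph123 ∅ 2 ∘ₗ
    Kop hGraph123 ∅ 3) (encG hGraph123 ![0,1,0,1]) = encG hGraph123 ![0,1,0,1] := by
  funext x
  obtain ⟨a, b, c, d, rfl⟩ : ∃ a b c d, x = ![a, b, c, d] :=
    ⟨x 0, x 1, x 2, x 3, funext fun i => by fin_cases i <;> rfl⟩
  rw [Kprod_apply]
  rcases fin2 a with rfl | rfl <;> rcases fin2 b with rfl | rfl <;>
    rcases fin2 c with rfl | rfl <;> rcases fin2 d with rfl | rfl <;>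
    norm_num [v4_3, v4_2, cme0000, cme0001, cme0010, cme0011, cme0100, cme0101, cme0110, cme0111, cme1000, cme1001, cme1010, cme1011, cme1100, cme1101, cme1110, cme1111, gv3x0000, gv3x0001, gv3x0010, gv3x0011, gv3x0100, gv3x0101, gv3x0110, gv3x0111, gv3x1000, gv3x1001, gv3x1010, gv3x1011, gv3x1100, gv3x1101, gv3x1110, gv3x1111]

lemma R1_of (ψ : QState (Fin 4)) (h1 : Kop hGraph123 ∅ 2 ψ = ψ) (x : Fin 4 → Fin 2) :
    ψ (fl 2 x) = (-1:ℂ)^((x 0:ℕ)+(x 1:ℕ)+(x 3:ℕ)) * ψ x := by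
  have h := congrFun h1 x
  rw [K2_apply] at h
  calc ψ (fl 2 x) = (-1:ℂ)^((x 0:ℕ)+(x 1:ℕ)+(x 3:ℕ)) *
        ((-1:ℂ)^((x 0:ℕ)+(x 1:ℕ)+(x 3:ℕ)) * ψ (fl 2 x)) := by
        rw [← mul_assoc, ← pow_add, Even.neg_one_pow ⟨_, rfl⟩, one_mul]
    _ = _ := by rw [h]

lemma R2_of (ψ : QState (Fin 4))
    (h2 : (Kop hGraph123 ∅ 0 ∘ₗ Kop hGraph123 ∅ 1 ∘ₗ Kop hGraph123 ∅ 2 ∘ₗ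
      Kop hGraph123 ∅ 3) ψ = ψ) (x : Fin 4 → Fin 2) :
    ψ (cmpl x) = -((-1:ℂ)^((x 0:ℕ)+(x 2:ℕ)) * ψ x) := by
  have h := congrFun h2 x
  rw [Kprod_apply] at h
  have h' : (-1:ℂ)^((x 0:ℕ)+(x 2:ℕ)) * ψ (cmpl x) = -ψ x := neg_eq_iff_eq_neg.mp h
  calc ψ (cmpl x) = (-1:ℂ)^((x 0:ℕ)+(x 2:ℕ)) *
        ((-1:ℂ)^((x 0:ℕ)+(x 2:ℕ)) * ψ (cmpl x)) := by
        rw [← mul_assoc, ← pow_add, Even.neg_one_pow ⟨_, rfl⟩, one_mul]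
    _ = (-1:ℂ)^((x 0:ℕ)+(x 2:ℕ)) * (-ψ x) := by rw [h']
    _ = _ := by ring

lemma bwd (ψ : QState (Fin 4)) (h1 : Kop hGraph123 ∅ 2 ψ = ψ)
    (h2 : (Kop hGraph123 ∅ 0 ∘ₗ Kop hGraph123 ∅ 1 ∘ₗ Kop hGraph123 ∅ 2 ∘ₗ
      Kop hGraph123 ∅ 3) ψ = ψ) : ψ ∈ W123 := by
  have hR1 := R1_of ψ h1
  have hR2 := R2_of ψ h2
  have key : ψ = (ψ ![0,0,0,0] + ψ ![0,0,0,1] + ψ ![0,1,0,0] + ψ ![0,1,0,1]) •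
        encG hGraph123 ![0,0,0,0]
      + (ψ ![0,0,0,0] + ψ ![0,0,0,1] - ψ ![0,1,0,0] - ψ ![0,1,0,1]) •
        encG hGraph123 ![1,1,0,0]
      + (ψ ![0,0,0,0] - ψ ![0,0,0,1] + ψ ![0,1,0,0] - ψ ![0,1,0,1]) •
        encG hGraph123 ![1,0,0,1]
      + (ψ ![0,0,0,0] - ψ ![0,0,0,1] - ψ ![0,1,0,0] + ψ ![0,1,0,1]) •
        encG hGraph123 ![0,1,0,1] := by
    funext x
    obtain ⟨a, b, c, d, rfl⟩ : ∃ a b c d, x = ![a, b, c, d] :=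
      ⟨x 0, x 1, x 2, x 3, funext fun i => by fin_cases i <;> rfl⟩
    simp only [Pi.add_apply, Pi.smul_apply, smul_eq_mul]
    rcases fin2 a with rfl | rfl <;> rcases fin2 b with rfl | rfl <;>
      rcases fin2 c with rfl | rfl <;> rcases fin2 d with rfl | rfl
    · norm_num [v4_3, v4_2, cmpl, show ((2:Fin 2):ℕ) = 0 from rfl, gv0x0000, gv1x0000, gv2x0000, gv3x0000]
      try ring
    · norm_num [v4_3, v4_2, cmpl, show ((2:Fin 2):ℕ) = 0 from rfl, gv0x0001, gv1x0001, gv2x0001, gv3x0001]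
      try ring
    · conv_lhs => rw [show (![0,0,1,0] : Fin 4 → Fin 2) = fl 2 ![0,0,0,0] from by decide]
      rw [hR1]
      norm_num [v4_3, v4_2, cmpl, show ((2:Fin 2):ℕ) = 0 from rfl, gv0x0010, gv1x0010, gv2x0010, gv3x0010]
      try ring
    · conv_lhs => rw [show (![0,0,1,1] : Fin 4 → Fin 2) = fl 2 ![0,0,0,1] from by decide]
      rw [hR1]
      norm_num [v4_3, v4_2, cmpl, show ((2:Fin 2):ℕ) = 0 from rfl, gv0x0011, gv1x0011, gv2x0011, gv3x0011]
      try ring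
    · norm_num [v4_3, v4_2, cmpl, show ((2:Fin 2):ℕ) = 0 from rfl, gv0x0100, gv1x0100, gv2x0100, gv3x0100]
      try ring
    · norm_num [v4_3, v4_2, cmpl, show ((2:Fin 2):ℕ) = 0 from rfl, gv0x0101, gv1x0101, gv2x0101, gv3x0101]
      try ring
    · conv_lhs => rw [show (![0,1,1,0] : Fin 4 → Fin 2) = fl 2 ![0,1,0,0] from by decide]
      rw [hR1]
      norm_num [v4_3, v4_2, cmpl, show ((2:Fin 2):ℕ) = 0 from rfl, gv0x0110, gv1x0110, gv2x0110, gv3x0110]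
      try ring
    · conv_lhs => rw [show (![0,1,1,1] : Fin 4 → Fin 2) = fl 2 ![0,1,0,1] from by decide]
      rw [hR1]
      norm_num [v4_3, v4_2, cmpl, show ((2:Fin 2):ℕ) = 0 from rfl, gv0x0111, gv1x0111, gv2x0111, gv3x0111]
      try ring
    · conv_lhs => rw [show (![1,0,0,0] : Fin 4 → Fin 2) = fl 2 (cmpl ![0,1,0,1]) from by decide]
      rw [hR1, hR2]
      norm_num [v4_3, v4_2, cmpl, show ((2:Fin 2):ℕ) = 0 from rfl, show (1:Fin 2) + 1 = 0 from rfl, gv0x1000, gv1x1000, gv2x1000, gv3x1000]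
      try ring
    · conv_lhs => rw [show (![1,0,0,1] : Fin 4 → Fin 2) = fl 2 (cmpl ![0,1,0,0]) from by decide]
      rw [hR1, hR2]
      norm_num [v4_3, v4_2, cmpl, show ((2:Fin 2):ℕ) = 0 from rfl, show (1:Fin 2) + 1 = 0 from rfl, gv0x1001, gv1x1001, gv2x1001, gv3x1001]
      try ring
    · conv_lhs => rw [show (![1,0,1,0] : Fin 4 → Fin 2) = cmpl ![0,1,0,1] from by decide]
      rw [hR2]
      norm_num [v4_3, v4_2, cmpl, show ((2:Fin 2):ℕ) = 0 from rfl, gv0x1010, gv1x1010, gv2x1010, gv3x1010]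
      try ring
    · conv_lhs => rw [show (![1,0,1,1] : Fin 4 → Fin 2) = cmpl ![0,1,0,0] from by decide]
      rw [hR2]
      norm_num [v4_3, v4_2, cmpl, show ((2:Fin 2):ℕ) = 0 from rfl, gv0x1011, gv1x1011, gv2x1011, gv3x1011]
      try ring
    · conv_lhs => rw [show (![1,1,0,0] : Fin 4 → Fin 2) = fl 2 (cmpl ![0,0,0,1]) from by decide]
      rw [hR1, hR2]
      norm_num [v4_3, v4_2, cmpl, show ((2:Fin 2):ℕ) = 0 from rfl, show (1:Fin 2) + 1 = 0 from rfl, gv0x1100, gv1x1100, gv2x1100, gv3x1100]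
      try ring
    · conv_lhs => rw [show (![1,1,0,1] : Fin 4 → Fin 2) = fl 2 (cmpl ![0,0,0,0]) from by decide]
      rw [hR1, hR2]
      norm_num [v4_3, v4_2, cmpl, show ((2:Fin 2):ℕ) = 0 from rfl, gv0x1101, gv1x1101, gv2x1101, gv3x1101]
      try ring
    · conv_lhs => rw [show (![1,1,1,0] : Fin 4 → Fin 2) = cmpl ![0,0,0,1] from by decide]
      rw [hR2]
      norm_num [v4_3, v4_2, cmpl, show ((2:Fin 2):ℕ) = 0 from rfl, gv0x1110, gv1x1110, gv2x1110, gv3x1110]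
      try ring
    · conv_lhs => rw [show (![1,1,1,1] : Fin 4 → Fin 2) = cmpl ![0,0,0,0] from by decide]
      rw [hR2]
      norm_num [v4_3, v4_2, cmpl, show ((2:Fin 2):ℕ) = 0 from rfl, gv0x1111, gv1x1111, gv2x1111, gv3x1111]
      try ring
  rw [key, W123]
  refine Submodule.add_mem _ (Submodule.add_mem _ (Submodule.add_mem _
    (Submodule.smul_mem _ _ ?_) (Submodule.smul_mem _ _ ?_))
    (Submodule.smul_mem _ _ ?_)) (Submodule.smul_mem _ _ ?_) <;>
    exact Submodule.subset_span (by simp)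

lemma memW_iff (ψ : QState (Fin 4)) : ψ ∈ W123 ↔
    (Kop hGraph123 ∅ 2 ψ = ψ ∧
      (Kop hGraph123 ∅ 0 ∘ₗ Kop hGraph123 ∅ 1 ∘ₗ Kop hGraph123 ∅ 2 ∘ₗ
        Kop hGraph123 ∅ 3) ψ = ψ) := by
  constructor
  · intro hψ
    have hle : W123 ≤ LinearMap.eqLocus (Kop hGraph123 ∅ 2) LinearMap.id ⊓
        LinearMap.eqLocus (Kop hGraph123 ∅ 0 ∘ₗ Kop hGraph123 ∅ 1 ∘ₗ Kop hGraph123 ∅ 2 ∘ₗ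
          Kop hGraph123 ∅ 3) LinearMap.id := by
      rw [W123, Submodule.span_le]
      rintro v hv
      simp only [Set.mem_insert_iff, Set.mem_singleton_iff] at hv
      rcases hv with rfl | rfl | rfl | rfl
      · exact Submodule.mem_inf.mpr ⟨LinearMap.mem_eqLocus.mpr fwdA0,
          LinearMap.mem_eqLocus.mpr fwdB0⟩
      · exact Submodule.mem_inf.mpr ⟨LinearMap.mem_eqLocus.mpr fwdA1,
          LinearMap.mem_eqLocus.mpr fwdB1⟩
      · exact Submodule.mem_inf.mpr ⟨LinearMap.mem_eqLocus.mpr fwdA2,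
          LinearMap.mem_eqLocus.mpr fwdB2⟩
      · exact Submodule.mem_inf.mpr ⟨LinearMap.mem_eqLocus.mpr fwdA3,
          LinearMap.mem_eqLocus.mpr fwdB3⟩
    have h := Submodule.mem_inf.mp (hle hψ)
    exact ⟨LinearMap.mem_eqLocus.mp h.1, LinearMap.mem_eqLocus.mp h.2⟩
  · rintro ⟨hc1, hc2⟩
    exact bwd ψ hc1 hc2

-- Part (ii) infrastructure
def gD (d : Fin 2) (c : {i : Fin 4 // i ≠ 0} → Fin 2) : Fin 4 → Fin 2 :=
  fun k => if h : k = 0 then d else c ⟨k, h⟩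

def sig2 (c : {i : Fin 4 // i ≠ 0} → Fin 2) : {i : Fin 4 // i ≠ 0} → Fin 2 :=
  fun j => if j = ⟨2, by decide⟩ then c j + 1 else c j

def cmS (c : {i : Fin 4 // i ≠ 0} → Fin 2) : {i : Fin 4 // i ≠ 0} → Fin 2 :=
  fun j => c j + 1

lemma gD0 (d : Fin 2) (c : {i : Fin 4 // i ≠ 0} → Fin 2) : gD d c 0 = d := by simp [gD]

lemma gD1 (d : Fin 2) (c : {i : Fin 4 // i ≠ 0} → Fin 2) :
    gD d c 1 = c ⟨1, by decide⟩ := by simp [gD]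

lemma gD2 (d : Fin 2) (c : {i : Fin 4 // i ≠ 0} → Fin 2) :
    gD d c 2 = c ⟨2, by decide⟩ := by simp [gD]

lemma gD3 (d : Fin 2) (c : {i : Fin 4 // i ≠ 0} → Fin 2) :
    gD d c 3 = c ⟨3, by decide⟩ := by simp [gD]

lemma flG (d : Fin 2) (c : {i : Fin 4 // i ≠ 0} → Fin 2) : fl 2 (gD d c) = gD d (sig2 c) := by
  funext k
  fin_cases k <;>
    simp (config := { decide := true }) [fl, gD, sig2, Function.update, Subtype.mk.injEq]

lemma cmG (d : Fin 2) (c : {i : Fin 4 // i ≠ 0} → Fin 2) :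
    cmpl (gD d c) = gD (d + 1) (cmS c) := by
  funext k
  fin_cases k <;> simp (config := { decide := true }) [cmpl, gD, cmS]

lemma sig2_inv : Function.Involutive sig2 := by
  intro c
  funext j
  by_cases h : j = ⟨2, by decide⟩ <;>
    simp [sig2, h, show ∀ a : Fin 2, a + 1 + 1 = a from by decide]

lemma cmS_inv : Function.Involutive cmS := by
  intro c
  funext j
  simp [cmS, show ∀ a : Fin 2, a + 1 + 1 = a from by decide]

def sig2E : ({i : Fin 4 // i ≠ 0} → Fin 2) ≃ ({i : Fin 4 // i ≠ 0} → Fin 2) :=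
  ⟨sig2, sig2, sig2_inv, sig2_inv⟩

def cmSE : ({i : Fin 4 // i ≠ 0} → Fin 2) ≃ ({i : Fin 4 // i ≠ 0} → Fin 2) :=
  ⟨cmS, cmS, cmS_inv, cmS_inv⟩

def esplit : (Fin 2 × ({i : Fin 4 // i ≠ 0} → Fin 2)) ≃ (Fin 4 → Fin 2) where
  toFun p := gD p.1 p.2
  invFun x := (x 0, fun j => x j.1)
  left_inv := by
    rintro ⟨d, c⟩
    refine Prod.ext (gD0 d c) ?_
    funext j
    simp [gD, j.2]
  right_inv := by
    intro x
    funext k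
    by_cases h : k = 0 <;> simp [gD, h]

section OuterLemmas
variable {E : Type} [NormedAddCommGroup E] [InnerProductSpace ℂ E]

lemma outer_smul_left (a : ℂ) (u v : E) : outer (a • u) v = a • outer u v := by
  ext w
  simp [outer, smul_smul, mul_comm]

lemma outer_smul_right (a : ℂ) (u v : E) : outer u (a • v) = conj a • outer u v := by
  ext w
  simp [outer, inner_smul_left, smul_smul, mul_comm]

end OuterLemmas

lemma neg_pow_opp (u v a b : ℕ) (h : u + v = 1) :
    (-1:ℂ)^(u+a+b) * (-1:ℂ)^(v+a+b) = -1 := by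
  rw [← pow_add, show (u+a+b)+(v+a+b) = 1+2*(a+b) by omega, pow_add, pow_mul]
  norm_num

lemma neg_pow_same (n : ℕ) : (-(-1:ℂ)^n) * -(-1:ℂ)^n = 1 := by
  rw [neg_mul_neg, ← pow_add]
  exact Even.neg_one_pow ⟨n, rfl⟩

theorem security_subspace_35_players123 :
    (∀ ψ : QState (Fin 4), ψ ∈ W123 ↔
      (Kop hGraph123 ∅ 2 ψ = ψ ∧
        (Kop hGraph123 ∅ 0 ∘ₗ Kop hGraph123 ∅ 1 ∘ₗ Kop hGraph123 ∅ 2 ∘ₗ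
          Kop hGraph123 ∅ 3) ψ = ψ)) ∧
    (∀ (E : Type) [NormedAddCommGroup E] [InnerProductSpace ℂ E]
        [FiniteDimensional ℂ E] (Ψ : (Fin 4 → Fin 2) → E),
      (∀ φ : E →ₗ[ℂ] ℂ, (fun x => φ (Ψ x)) ∈ W123) →
      (∑ x : Fin 4 → Fin 2, ‖Ψ x‖ ^ 2) = 1 →
      ∀ d d' : Fin 2,
        (∑ c : {i : Fin 4 // i ≠ 0} → Fin 2,
            outer (Ψ fun k => if h : k = 0 then d else c ⟨k, h⟩)
                  (Ψ fun k => if h : k = 0 then d' else c ⟨k, h⟩)) =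
          (if d = d' then (1 / 2 : ℂ) else 0) •
            ∑ x : Fin 4 → Fin 2, outer (Ψ x) (Ψ x)) := by
  refine ⟨memW_iff, ?_⟩
  intro E _ _ _ Ψ hW _ d d'
  have mem := fun φ : E →ₗ[ℂ] ℂ => (memW_iff _).mp (hW φ)
  have V1 : ∀ x, Ψ (fl 2 x) = ((-1:ℂ)^((x 0:ℕ)+(x 1:ℕ)+(x 3:ℕ))) • Ψ x := by
    intro x
    have hz : ∀ φ : Module.Dual ℂ E,
        φ (Ψ (fl 2 x) - ((-1:ℂ)^((x 0:ℕ)+(x 1:ℕ)+(x 3:ℕ))) • Ψ x) = 0 := by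
      intro φ
      have h : φ (Ψ (fl 2 x)) = (-1:ℂ)^((x 0:ℕ)+(x 1:ℕ)+(x 3:ℕ)) * φ (Ψ x) :=
        R1_of _ (mem φ).1 x
      simp [map_sub, map_smul, h]
    exact sub_eq_zero.mp ((Module.forall_dual_apply_eq_zero_iff ℂ _).mp hz)
  have V2 : ∀ x, Ψ (cmpl x) = (-((-1:ℂ)^((x 0:ℕ)+(x 2:ℕ)))) • Ψ x := by
    intro x
    have hz : ∀ φ : Module.Dual ℂ E,
        φ (Ψ (cmpl x) - (-((-1:ℂ)^((x 0:ℕ)+(x 2:ℕ)))) • Ψ x) = 0 := by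
      intro φ
      have h : φ (Ψ (cmpl x)) = -((-1:ℂ)^((x 0:ℕ)+(x 2:ℕ)) * φ (Ψ x)) :=
        R2_of _ (mem φ).2 x
      simp only [map_sub, map_smul, h, smul_eq_mul]
      ring
    exact sub_eq_zero.mp ((Module.forall_dual_apply_eq_zero_iff ℂ _).mp hz)
  show (∑ c, outer (Ψ (gD d c)) (Ψ (gD d' c))) = _
  by_cases hd : d = d'
  · subst hd
    rw [if_pos rfl]
    have hSS : ∀ t : Fin 2, (∑ c, outer (Ψ (gD (t+1) c)) (Ψ (gD (t+1) c)))
        = ∑ c, outer (Ψ (gD t c)) (Ψ (gD t c)) := by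
      intro t
      rw [← Equiv.sum_comp cmSE (fun c => outer (Ψ (gD (t+1) c)) (Ψ (gD (t+1) c)))]
      refine Finset.sum_congr rfl fun c _ => ?_
      show outer (Ψ (gD (t+1) (cmS c))) (Ψ (gD (t+1) (cmS c))) = _
      rw [← cmG, V2 (gD t c), outer_smul_left, outer_smul_right, smul_smul]
      rw [map_neg, map_pow, map_neg, map_one, neg_pow_same, one_smul]
    have h01 : (∑ c, outer (Ψ (gD 1 c)) (Ψ (gD 1 c)))
        = ∑ c, outer (Ψ (gD 0 c)) (Ψ (gD 0 c)) := by
      have := hSS 0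
      norm_num at this
      exact this
    have htot : ∑ x : Fin 4 → Fin 2, outer (Ψ x) (Ψ x)
        = (∑ c, outer (Ψ (gD 0 c)) (Ψ (gD 0 c))) +
          ∑ c, outer (Ψ (gD 1 c)) (Ψ (gD 1 c)) := by
      rw [← Equiv.sum_comp esplit (fun x => outer (Ψ x) (Ψ x)), Fintype.sum_prod_type,
        Fin.sum_univ_two]
      rfl
    rcases fin2 d with rfl | rfl
    · rw [htot, h01, ← two_smul ℂ, smul_smul]
      norm_num
    · rw [htot, h01, ← h01, ← two_smul ℂ, smul_smul]
      norm_num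
  · rw [if_neg hd, zero_smul]
    have hdd : (d:ℕ) + (d':ℕ) = 1 := by
      rcases fin2 d with rfl | rfl <;> rcases fin2 d' with rfl | rfl <;>
        first | rfl | exact absurd rfl hd
    have hterm : ∀ c, outer (Ψ (gD d (sig2 c))) (Ψ (gD d' (sig2 c)))
        = -outer (Ψ (gD d c)) (Ψ (gD d' c)) := by
      intro c
      have h1 := V1 (gD d c); rw [flG] at h1
      have h2 := V1 (gD d' c); rw [flG] at h2
      simp only [gD0, gD1, gD3] at h1 h2
      rw [h1, h2, outer_smul_left, outer_smul_right, smul_smul]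
      rw [map_pow, map_neg, map_one, neg_pow_opp _ _ _ _ hdd, neg_one_smul]
    have hrei : (∑ c, outer (Ψ (gD d c)) (Ψ (gD d' c)))
        = ∑ c, outer (Ψ (gD d (sig2 c))) (Ψ (gD d' (sig2 c))) :=
      (Equiv.sum_comp sig2E (fun c => outer (Ψ (gD d c)) (Ψ (gD d' c)))).symm
    have hneg : (∑ c, outer (Ψ (gD d c)) (Ψ (gD d' c)))
        = -(∑ c, outer (Ψ (gD d c)) (Ψ (gD d' c))) := by
      conv_lhs => rw [hrei]
      rw [Finset.sum_congr rfl fun c _ => hterm c, Finset.sum_neg_distrib]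
    have h2S : (2:ℂ) • (∑ c, outer (Ψ (gD d c)) (Ψ (gD d' c))) = 0 := by
      rw [two_smul]
      nth_rewrite 2 [hneg]
      exact add_neg_cancel _
    calc (∑ c, outer (Ψ (gD d c)) (Ψ (gD d' c)))
        = (1/2 : ℂ) • ((2:ℂ) • ∑ c, outer (Ψ (gD d c)) (Ψ (gD d' c))) := by
          rw [smul_smul]; norm_num
      _ = 0 := by rw [h2S, smul_zero]

end
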